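/- In the recursive avalanche construction with i.i.d. uniform [0,1] random variables U_1,...,U_N and 0 < p < 1/N, the expected value of the k-th generation size satisfies E(ε_{k,N}) = (N!/(N-k)!) * p^k for all 1 ≤ k ≤ N. -/

import Mathlib

open MeasureTheory ProbabilityTheory

namespace AvalancheAux

noncomputable def A (p : ℝ) {n : ℕ} (v : Fin n → ℝ) : ℕ → ℝ
  | 0 => 0
  | 1 => 1
  | (k+2) => A p v (k+1) +
      ∑ j, Set.indicator (Set.Icc (1 - p * A p v (k+1)) (1 - p * A p v k))
        (fun _ => (1:ℝ)) (v j)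

lemma A_zero (p : ℝ) {n : ℕ} (v : Fin n → ℝ) : A p v 0 = 0 := rfl
lemma A_one (p : ℝ) {n : ℕ} (v : Fin n → ℝ) : A p v 1 = 1 := rfl
lemma A_succ_succ (p : ℝ) {n : ℕ} (v : Fin n → ℝ) (m : ℕ) :
    A p v (m+2) = A p v (m+1) +
      ∑ j, Set.indicator (Set.Icc (1 - p * A p v (m+1)) (1 - p * A p v m))
        (fun _ => (1:ℝ)) (v j) := rfl

/-- The k-th generation interval, for `k ≥ 1`. -/
def J (p : ℝ) {n : ℕ} (v : Fin n → ℝ) (k : ℕ) : Set ℝ :=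
  Set.Icc (1 - p * A p v k) (1 - p * A p v (k-1))

lemma A_succ (p : ℝ) {n : ℕ} (v : Fin n → ℝ) {k : ℕ} (hk : 1 ≤ k) :
    A p v (k+1) = A p v k + ∑ j, (J p v k).indicator (fun _ => (1:ℝ)) (v j) := by
  obtain ⟨m, rfl⟩ : ∃ m, k = m + 1 := ⟨k - 1, by omega⟩
  rw [A_succ_succ]
  rfl

lemma A_mono (p : ℝ) {n : ℕ} (v : Fin n → ℝ) : Monotone (A p v) := by
  apply monotone_nat_of_le_succ
  intro k
  match k with
  | 0 => simp [A_zero, A_one]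
  | (m+1) =>
    rw [A_succ_succ]
    have : (0:ℝ) ≤ ∑ j, Set.indicator (Set.Icc (1 - p * A p v (m+1)) (1 - p * A p v m))
        (fun _ => (1:ℝ)) (v j) :=
      Finset.sum_nonneg fun j _ => Set.indicator_nonneg (fun _ _ => zero_le_one) _
    linarith

lemma A_nonneg (p : ℝ) {n : ℕ} (v : Fin n → ℝ) (k : ℕ) : 0 ≤ A p v k := by
  have := A_mono p v (Nat.zero_le k); rwa [A_zero] at this

lemma sum_indicator_nat {n : ℕ} (s : Set ℝ) (v : Fin n → ℝ) :
    ∃ c : ℕ, ∑ j, s.indicator (fun _ => (1:ℝ)) (v j) = c := by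
  classical
  refine ⟨(Finset.univ.filter (fun j => v j ∈ s)).card, ?_⟩
  simp only [Set.indicator_apply]
  rw [Finset.sum_boole]

lemma A_nat (p : ℝ) {n : ℕ} (v : Fin n → ℝ) (k : ℕ) : ∃ c : ℕ, A p v k = c := by
  induction k using Nat.strong_induction_on with
  | _ k ih =>
    match k with
    | 0 => exact ⟨0, by simp [A_zero]⟩
    | 1 => exact ⟨1, by simp [A_one]⟩
    | (m+2) =>
      obtain ⟨c1, hc1⟩ := ih (m+1) (by omega)
      obtain ⟨c2, hc2⟩ := sum_indicator_nat
        (Set.Icc (1 - p * A p v (m+1)) (1 - p * A p v m)) v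
      exact ⟨c1 + c2, by rw [A_succ_succ, hc2, hc1]; push_cast; ring⟩

/-- The "lattice" of possible interval endpoints. -/
def Lat (p : ℝ) : Set ℝ := Set.range (fun c : ℕ => 1 - p * c)

lemma countable_Lat (p : ℝ) : (Lat p).Countable := Set.countable_range _

lemma mem_J_strict {p x : ℝ} {n : ℕ} {v : Fin n → ℝ} {k : ℕ} (hx : x ∉ Lat p)
    (h : x ∈ J p v k) : 1 - p * A p v k < x ∧ x < 1 - p * A p v (k-1) := by
  obtain ⟨h1, h2⟩ := h
  obtain ⟨c1, hc1⟩ := A_nat p v k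
  obtain ⟨c2, hc2⟩ := A_nat p v (k-1)
  constructor
  · rcases h1.lt_or_eq with h | h
    · exact h
    · exact absurd ⟨c1, by rw [← h, hc1]⟩ hx
  · rcases h2.lt_or_eq with h | h
    · exact h
    · exact absurd ⟨c2, by rw [h, hc2]⟩ hx

lemma J_unique {p x : ℝ} {n : ℕ} {v : Fin n → ℝ} (hp : 0 ≤ p) (hx : x ∉ Lat p)
    {m m' : ℕ} (hm : 1 ≤ m) (hm' : 1 ≤ m')
    (h1 : x ∈ J p v m) (h2 : x ∈ J p v m') : m = m' := by
  have key : ∀ a b : ℕ, 1 ≤ a → x ∈ J p v a → x ∈ J p v b → a < b → False := by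
    intro a b ha ha' hb' hab
    have s1 := (mem_J_strict hx ha').1
    have s2 := (mem_J_strict hx hb').2
    have hmono : A p v a ≤ A p v (b-1) := A_mono p v (by omega)
    nlinarith
  rcases lt_trichotomy m m' with h | h | h
  · exact absurd h (fun h => key m m' hm h1 h2 h)
  · exact h
  · exact absurd h (fun h => key m' m hm' h2 h1 h)

lemma A_insertNth {p x : ℝ} {n : ℕ} (j : Fin (n+1)) (v : Fin n → ℝ) (k : ℕ)
    (hk : ∀ m, 1 ≤ m → m < k → x ∉ J p v m) :
    A p (j.insertNth x v) k = A p v k := by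
  induction k using Nat.strong_induction_on with
  | _ k ih =>
    match k with
    | 0 => simp [A_zero]
    | 1 => simp [A_one]
    | (m+2) =>
      have h1 : A p (j.insertNth x v) (m+1) = A p v (m+1) :=
        ih (m+1) (by omega) (fun a ha hb => hk a ha (by omega))
      have h0 : A p (j.insertNth x v) m = A p v m :=
        ih m (by omega) (fun a ha hb => hk a ha (by omega))
      rw [A_succ_succ, A_succ_succ, h1, h0]
      congr 1
      rw [Fin.sum_univ_succAbove _ j, Fin.insertNth_apply_same,
        Set.indicator_of_notMem (by simpa [J] using hk (m+1) (by omega) (by omega)), zero_add]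
      exact Finset.sum_congr rfl fun i _ => by rw [Fin.insertNth_apply_succAbove]

lemma mem_J_insertNth {p x : ℝ} {n : ℕ} (hp : 0 ≤ p) (hx : x ∉ Lat p)
    (j : Fin (n+1)) (v : Fin n → ℝ) {k : ℕ} (hk : 1 ≤ k) :
    x ∈ J p (j.insertNth x v) k ↔ x ∈ J p v k := by
  have bwd : ∀ k : ℕ, 1 ≤ k → x ∈ J p v k → x ∈ J p (j.insertNth x v) k := by
    intro k hk h
    have hno : ∀ m, 1 ≤ m → m < k → x ∉ J p v m := by
      intro m hm hmk hmem
      exact absurd (J_unique hp hx hm hk hmem h) (by omega)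
    have e1 := A_insertNth (p := p) (x := x) j v k hno
    have e0 := A_insertNth (p := p) (x := x) j v (k-1) (fun m hm hmk => hno m hm (by omega))
    simpa only [J, e1, e0] using h
  constructor
  · intro h
    by_cases hall : ∀ m, 1 ≤ m → m < k → x ∉ J p v m
    · have e1 := A_insertNth (p := p) (x := x) j v k hall
      have e0 := A_insertNth (p := p) (x := x) j v (k-1) (fun m hm hmk => hall m hm (by omega))
      simpa only [J, e1, e0] using h
    · push_neg at hall
      obtain ⟨m, hm1, hmk, hmem⟩ := hall
      classical
      have hex : ∃ m, 1 ≤ m ∧ m < k ∧ x ∈ J p v m := ⟨m, hm1, hmk, hmem⟩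
      let m₀ := Nat.find hex
      obtain ⟨hm₀1, hm₀k, hm₀mem⟩ := Nat.find_spec hex
      have : x ∈ J p (j.insertNth x v) m₀ := bwd m₀ hm₀1 hm₀mem
      have := J_unique hp hx hm₀1 hk this h
      omega
  · exact bwd k hk

lemma sum_indicator_J_le_one {p x : ℝ} {n : ℕ} {v : Fin n → ℝ} (hp : 0 ≤ p)
    (hx : x ∉ Lat p) (k : ℕ) :
    ∑ m ∈ Finset.Ico 1 k, (J p v m).indicator (fun _ => (1:ℝ)) x ≤ 1 := by
  classical
  simp only [Set.indicator_apply]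
  rw [Finset.sum_boole]
  have : ((Finset.Ico 1 k).filter (fun m => x ∈ J p v m)).card ≤ 1 := by
    apply Finset.card_le_one.mpr
    intro a ha b hb
    simp only [Finset.mem_filter, Finset.mem_Ico] at ha hb
    exact J_unique hp hx ha.1.1 hb.1.1 ha.2 hb.2
  exact_mod_cast this

lemma A_le {p : ℝ} {n : ℕ} {v : Fin n → ℝ} (hp : 0 ≤ p)
    (hv : ∀ i, v i ∉ Lat p) (k : ℕ) : A p v k ≤ n + 1 := by
  rcases Nat.eq_zero_or_pos k with rfl | hk
  · rw [A_zero]; positivity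
  have hrep : A p v k = 1 + ∑ m ∈ Finset.Ico 1 k, ∑ j, (J p v m).indicator
      (fun _ => (1:ℝ)) (v j) := by
    induction k with
    | zero => omega
    | succ k ihk =>
      rcases Nat.eq_zero_or_pos k with rfl | hk'
      · simp [A_one]
      · rw [A_succ p v hk', ihk hk', Finset.sum_Ico_succ_top hk']
        ring
  rw [hrep, Finset.sum_comm]
  have hb : ∀ j : Fin n, ∑ m ∈ Finset.Ico 1 k, (J p v m).indicator (fun _ => (1:ℝ)) (v j) ≤ 1 :=
    fun j => sum_indicator_J_le_one hp (hv j) k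
  have : ∑ j : Fin n, ∑ m ∈ Finset.Ico 1 k, (J p v m).indicator (fun _ => (1:ℝ)) (v j)
      ≤ ∑ _j : Fin n, (1:ℝ) := Finset.sum_le_sum fun j _ => hb j
  simp only [Finset.sum_const, Finset.card_univ, Fintype.card_fin, smul_eq_mul, nsmul_eq_mul, mul_one] at this
  linarith

lemma measurable_A (p : ℝ) {n : ℕ} (k : ℕ) : Measurable (fun v : Fin n → ℝ => A p v k) := by
  induction k using Nat.strong_induction_on with
  | _ k ih =>
    match k with
    | 0 => simp only [A_zero]; exact measurable_const
    | 1 => simp only [A_one]; exact measurable_const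
    | (m+2) =>
      simp only [A_succ_succ]
      apply Measurable.add (ih (m+1) (by omega))
      apply Finset.measurable_sum
      intro j _
      have h1 := ih (m+1) (by omega)
      have h0 := ih m (by omega)
      have heq : (fun v : Fin n → ℝ => Set.indicator
          (Set.Icc (1 - p * A p v (m+1)) (1 - p * A p v m)) (fun _ => (1:ℝ)) (v j))
          = fun v : Fin n → ℝ =>
            if 1 - p * A p v (m+1) ≤ v j ∧ v j ≤ 1 - p * A p v m then (1:ℝ) else 0 := by
        funext v
        rw [Set.indicator_apply]
        simp [Set.mem_Icc]
      rw [heq]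
      have hs : MeasurableSet {v : Fin n → ℝ |
          1 - p * A p v (m+1) ≤ v j ∧ v j ≤ 1 - p * A p v m} := by
        have : {v : Fin n → ℝ | 1 - p * A p v (m+1) ≤ v j ∧ v j ≤ 1 - p * A p v m}
            = {v : Fin n → ℝ | 1 - p * A p v (m+1) ≤ v j} ∩
              {v : Fin n → ℝ | v j ≤ 1 - p * A p v m} := rfl
        rw [this]
        exact (measurableSet_le (measurable_const.sub (measurable_const.mul h1))
            (measurable_pi_apply j)).inter
          (measurableSet_le (measurable_pi_apply j)
            (measurable_const.sub (measurable_const.mul h0)))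
      exact Measurable.ite hs measurable_const measurable_const



noncomputable def mu0 : Measure ℝ := volume.restrict (Set.Icc (0:ℝ) 1)

instance : IsProbabilityMeasure mu0 := ⟨by simp [mu0]⟩

lemma mu0_Lat (p : ℝ) : mu0 (Lat p) = 0 :=
  le_antisymm (le_trans (Measure.restrict_le_self _) (by
    rw [(countable_Lat p).measure_zero])) zero_le

lemma measurable_indJ (p : ℝ) {n : ℕ} (k : ℕ) :
    Measurable (fun z : ℝ × (Fin n → ℝ) => (J p z.2 k).indicator (fun _ => (1:ℝ)) z.1) := by
  classical
  have h1 : Measurable fun z : ℝ × (Fin n → ℝ) => A p z.2 k :=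
    (measurable_A p k).comp measurable_snd
  have h0 : Measurable fun z : ℝ × (Fin n → ℝ) => A p z.2 (k-1) :=
    (measurable_A p (k-1)).comp measurable_snd
  have heq : (fun z : ℝ × (Fin n → ℝ) => (J p z.2 k).indicator (fun _ => (1:ℝ)) z.1)
      = fun z => if 1 - p * A p z.2 k ≤ z.1 ∧ z.1 ≤ 1 - p * A p z.2 (k-1) then (1:ℝ) else 0 := by
    funext z; rw [Set.indicator_apply]; simp [J, Set.mem_Icc]
  rw [heq]
  have hs : MeasurableSet {z : ℝ × (Fin n → ℝ) |
      1 - p * A p z.2 k ≤ z.1 ∧ z.1 ≤ 1 - p * A p z.2 (k-1)} :=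
    (measurableSet_le (measurable_const.sub (measurable_const.mul h1)) measurable_fst).inter
      (measurableSet_le measurable_fst (measurable_const.sub (measurable_const.mul h0)))
  exact Measurable.ite hs measurable_const measurable_const

lemma measurable_ind_self (p : ℝ) {n : ℕ} (k : ℕ) (j : Fin n) :
    Measurable (fun v : Fin n → ℝ => (J p v k).indicator (fun _ => (1:ℝ)) (v j)) := by
  have h2 : Measurable fun v : Fin n → ℝ => ((v j, v) : ℝ × (Fin n → ℝ)) :=
    (measurable_pi_apply j).prodMk measurable_id
  exact (measurable_indJ p k).comp h2

lemma norm_ind_le {s : Set ℝ} {x : ℝ} : ‖s.indicator (fun _ => (1:ℝ)) x‖ ≤ 1 := by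
  classical
  rw [Set.indicator_apply]
  split <;> simp

theorem core (n : ℕ) (p : ℝ) (hp : 0 < p) (hpn : p * n < 1) :
    ∀ k, k ≤ n → ∫ v : Fin n → ℝ, (A p v (k+1) - A p v k) ∂(Measure.pi fun _ => mu0)
      = (∏ i ∈ Finset.range k, ((n:ℝ) - i)) * p ^ k := by
  induction n with
  | zero =>
    intro k hk
    obtain rfl : k = 0 := by omega
    simp [A_zero, A_one]
  | succ n ih =>
    intro k hk
    match k, hk with
    | 0, _ => simp [A_zero, A_one]
    | (m+1), hk =>
      have hm : m ≤ n := by omega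
      have hpn1 : p * ((n:ℝ) + 1) < 1 := by push_cast at hpn; linarith
      have hpn' : p * n < 1 := by nlinarith [hp.le, Nat.cast_nonneg (α := ℝ) n]
      have hint : ∀ j : Fin (n+1), Integrable
          (fun v : Fin (n+1) → ℝ => (J p v (m+1)).indicator (fun _ => (1:ℝ)) (v j))
          (Measure.pi fun _ => mu0) :=
        fun j => Integrable.mono' (integrable_const 1)
          ((measurable_ind_self p (m+1) j).aestronglyMeasurable)
          (ae_of_all _ fun v => norm_ind_le)
      have step1 : ∫ v : Fin (n+1) → ℝ, (A p v (m+2) - A p v (m+1)) ∂(Measure.pi fun _ => mu0)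
          = ∑ j : Fin (n+1), ∫ v : Fin (n+1) → ℝ,
              (J p v (m+1)).indicator (fun _ => (1:ℝ)) (v j) ∂(Measure.pi fun _ => mu0) := by
        rw [← integral_finset_sum _ (fun j _ => hint j)]
        congr 1
        funext v
        rw [A_succ p v (by omega : 1 ≤ m+1)]
        ring
      have key : ∀ j : Fin (n+1),
          ∫ v : Fin (n+1) → ℝ, (J p v (m+1)).indicator (fun _ => (1:ℝ)) (v j)
            ∂(Measure.pi fun _ => mu0)
          = p * ((∏ i ∈ Finset.range m, ((n:ℝ) - i)) * p ^ m) := by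
        intro j
        set e := MeasurableEquiv.piFinSuccAbove (fun _ : Fin (n+1) => ℝ) j with he
        have hpres := (measurePreserving_piFinSuccAbove (fun _ : Fin (n+1) => mu0) j).symm
        have hA : ∫ v : Fin (n+1) → ℝ, (J p v (m+1)).indicator (fun _ => (1:ℝ)) (v j)
              ∂(Measure.pi fun _ => mu0)
            = ∫ z : ℝ × (Fin n → ℝ), (J p (e.symm z) (m+1)).indicator (fun _ => (1:ℝ))
              (e.symm z j) ∂(mu0.prod (Measure.pi fun _ : Fin n => mu0)) :=
          (hpres.integral_comp (MeasurableEquiv.measurableEmbedding _)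
            (fun v : Fin (n+1) → ℝ => (J p v (m+1)).indicator (fun _ => (1:ℝ)) (v j))).symm
        have hesymm : ∀ z : ℝ × (Fin n → ℝ), e.symm z = j.insertNth z.1 z.2 := by
          intro z
          simp [he, MeasurableEquiv.piFinSuccAbove_symm_apply, Fin.insertNthEquiv]
        have haeL : ∀ᵐ z ∂(mu0.prod (Measure.pi fun _ : Fin n => mu0)), z.1 ∉ Lat p := by
          rw [ae_iff]
          have hnull : (mu0.prod (Measure.pi fun _ : Fin n => mu0)) {z | z.1 ∈ Lat p} = 0 := by
            have hset : {z : ℝ × (Fin n → ℝ) | z.1 ∈ Lat p} = (Lat p) ×ˢ Set.univ := by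
              ext z; simp
            rw [hset, Measure.prod_prod, mu0_Lat, zero_mul]
          simpa using hnull
        have hae : (fun z : ℝ × (Fin n → ℝ) => (J p (e.symm z) (m+1)).indicator
              (fun _ => (1:ℝ)) (e.symm z j))
            =ᵐ[mu0.prod (Measure.pi fun _ : Fin n => mu0)]
            (fun z => (J p z.2 (m+1)).indicator (fun _ => (1:ℝ)) z.1) := by
          filter_upwards [haeL] with z hz
          rw [hesymm z, Fin.insertNth_apply_same]
          have hiff := mem_J_insertNth hp.le hz j z.2 (k := m+1) (by omega)
          by_cases hmem : z.1 ∈ J p z.2 (m+1)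
          · rw [Set.indicator_of_mem (hiff.mpr hmem), Set.indicator_of_mem hmem]
          · rw [Set.indicator_of_notMem (fun hc => hmem (hiff.mp hc)),
              Set.indicator_of_notMem hmem]
        have hB := integral_congr_ae hae
        have hintp : Integrable (fun z : ℝ × (Fin n → ℝ) =>
            (J p z.2 (m+1)).indicator (fun _ => (1:ℝ)) z.1)
            (mu0.prod (Measure.pi fun _ : Fin n => mu0)) :=
          Integrable.mono' (integrable_const 1)
            ((measurable_indJ p (m+1)).aestronglyMeasurable)
            (ae_of_all _ fun z => norm_ind_le)
        have hC := integral_prod_symm (μ := mu0) (ν := Measure.pi fun _ : Fin n => mu0)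
          (fun z : ℝ × (Fin n → ℝ) => (J p z.2 (m+1)).indicator (fun _ => (1:ℝ)) z.1) hintp
        have hinner : ∀ v : Fin n → ℝ,
            ∫ x, (J p v (m+1)).indicator (fun _ => (1:ℝ)) x ∂mu0
              = (mu0 (J p v (m+1))).toReal := by
          intro v
          simp only [J]
          rw [integral_indicator_const (1:ℝ) measurableSet_Icc]
          simp [J, Measure.real]
        have haevL : ∀ᵐ v ∂(Measure.pi fun _ : Fin n => mu0), ∀ i, v i ∉ Lat p := by
          rw [ae_iff]
          have hnullv : (Measure.pi fun _ : Fin n => mu0) {v | ∃ i, v i ∈ Lat p} = 0 := by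
            have h1 : {v : Fin n → ℝ | ∃ i, v i ∈ Lat p} = ⋃ i, {v | v i ∈ Lat p} := by
              ext v; simp
            rw [h1]
            refine measure_iUnion_null fun i => ?_
            have h2 : {v : Fin n → ℝ | v i ∈ Lat p}
                = Set.pi Set.univ (fun j' => if j' = i then Lat p else Set.univ) := by
              ext v
              simp only [Set.mem_setOf_eq, Set.mem_pi, Set.mem_univ, true_implies]
              constructor
              · intro h j'; by_cases hj : j' = i <;> simp [hj, h]
              · intro h; have := h i; simpa using this
            rw [h2, Measure.pi_pi]
            refine Finset.prod_eq_zero (Finset.mem_univ i) ?_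
            simp [mu0_Lat]
          simpa [not_forall] using hnullv
        have haev : (fun v : Fin n → ℝ => (mu0 (J p v (m+1))).toReal)
            =ᵐ[Measure.pi fun _ : Fin n => mu0]
            (fun v => p * (A p v (m+1) - A p v m)) := by
          filter_upwards [haevL] with v hv
          have hAle : A p v (m+1) ≤ n + 1 := A_le hp.le hv (m+1)
          have ha0 : 0 ≤ 1 - p * A p v (m+1) := by nlinarith
          have hb1 : 1 - p * A p v m ≤ 1 := by
            have := A_nonneg p v m; nlinarith
          have hab : 1 - p * A p v (m+1) ≤ 1 - p * A p v m := by
            have := A_mono p v (Nat.le_succ m); nlinarith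
          have hJm : J p v (m+1) = Set.Icc (1 - p * A p v (m+1)) (1 - p * A p v m) := by
            simp [J]
          rw [hJm, mu0, Measure.restrict_apply measurableSet_Icc,
            Set.inter_eq_self_of_subset_left (Set.Icc_subset_Icc ha0 hb1),
            Real.volume_Icc, ENNReal.toReal_ofReal (by linarith)]
          ring
        calc ∫ v : Fin (n+1) → ℝ, (J p v (m+1)).indicator (fun _ => (1:ℝ)) (v j)
              ∂(Measure.pi fun _ => mu0)
            = ∫ v : Fin n → ℝ, ∫ x, (J p v (m+1)).indicator (fun _ => (1:ℝ)) x ∂mu0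
                ∂(Measure.pi fun _ : Fin n => mu0) := by rw [hA, hB, hC]
          _ = ∫ v : Fin n → ℝ, (mu0 (J p v (m+1))).toReal
                ∂(Measure.pi fun _ : Fin n => mu0) := by simp_rw [hinner]
          _ = ∫ v : Fin n → ℝ, p * (A p v (m+1) - A p v m)
                ∂(Measure.pi fun _ : Fin n => mu0) := integral_congr_ae haev
          _ = p * ((∏ i ∈ Finset.range m, ((n:ℝ) - i)) * p ^ m) := by
              rw [integral_const_mul, ih hpn' m hm]
      rw [step1]
      simp_rw [key]
      rw [Finset.sum_const, Finset.card_univ, Fintype.card_fin, nsmul_eq_mul]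
      have hprod : ∏ i ∈ Finset.range (m+1), (((n:ℕ)+1 : ℝ) - i)
          = ((n:ℝ) + 1) * ∏ i ∈ Finset.range m, ((n:ℝ) - i) := by
        rw [Finset.prod_range_succ']
        push_cast
        have hcg : ∀ i ∈ Finset.range m, ((n:ℝ) + 1 - ((i:ℝ)+1)) = (n:ℝ) - i := by
          intro i _; ring
        rw [Finset.prod_congr rfl hcg]
        ring
      push_cast
      push_cast at hprod
      rw [hprod]
      ring

lemma prod_desc (N : ℕ) : ∀ k, k ≤ N →
    (∏ i ∈ Finset.range k, ((N:ℝ) - i)) = (N.factorial : ℝ) / (N - k).factorial := by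
  intro k
  induction k with
  | zero =>
    intro _
    simp [div_self (by exact_mod_cast N.factorial_pos.ne' : ((N.factorial : ℝ)) ≠ 0)]
  | succ k ihk =>
    intro hk
    have hkN : k < N := by omega
    rw [Finset.prod_range_succ, ihk (by omega)]
    have h1 : N - k = (N - (k+1)) + 1 := by omega
    have h2 : ((N - k).factorial : ℝ) = (N - k : ℕ) * (N - (k+1)).factorial := by
      rw [h1, Nat.factorial_succ]
      push_cast
      ring
    have h3 : ((N:ℝ) - k) = ((N - k : ℕ) : ℝ) := by
      rw [Nat.cast_sub hkN.le]
    have h4 : ((N - k : ℕ) : ℝ) ≠ 0 := by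
      have : 0 < N - k := by omega
      exact_mod_cast this.ne'
    have h5 : ((N - (k+1)).factorial : ℝ) ≠ 0 := by
      exact_mod_cast (N - (k+1)).factorial_pos.ne'
    rw [h2, h3]
    field_simp

end AvalancheAux

open AvalancheAux in
theorem avalanche_generation_mean
    {Ω : Type*} [MeasurableSpace Ω] (μ : Measure Ω) [IsProbabilityMeasure μ]
    (N : ℕ) (hN : 0 < N) (p : ℝ) (hp : 0 < p) (hp' : p < 1 / N)
    (U : Fin N → Ω → ℝ)
    (hmeas : ∀ j, Measurable (U j))
    (hindep : iIndepFun U μ)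
    (hunif : ∀ j, Measure.map (U j) μ = volume.restrict (Set.Icc (0 : ℝ) 1))
    (ε : ℕ → Ω → ℝ)
    (hε0 : ε 0 = fun _ => 1)
    (hεk : ∀ k, 1 ≤ k → ε k = fun ω => ∑ j : Fin N,
      Set.indicator
        (Set.Icc (1 - p * ∑ i ∈ Finset.range k, ε i ω)
                 (1 - p * ∑ i ∈ Finset.range (k - 1), ε i ω))
        (fun _ => (1 : ℝ)) (U j ω)) :
    ∀ k, 1 ≤ k → k ≤ N →
      ∫ ω, ε k ω ∂μ = ((N.factorial : ℝ) / (N - k).factorial) * p ^ k := by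
  intro k hk1 hkN
  set T : Ω → (Fin N → ℝ) := fun ω j => U j ω with hT
  have hTmeas : Measurable T := measurable_pi_lambda _ fun j => hmeas j
  -- the joint law is the product of uniforms
  have hmap : μ.map T = Measure.pi fun _ : Fin N => mu0 := by
    refine (Measure.pi_eq fun s hs => ?_).symm
    rw [Measure.map_apply hTmeas (MeasurableSet.univ_pi hs)]
    have hpre : T ⁻¹' (Set.pi Set.univ s) = ⋂ j ∈ Finset.univ, U j ⁻¹' s j := by
      ext ω; simp [Set.mem_pi, hT]
    rw [hpre, hindep.measure_inter_preimage_eq_mul Finset.univ (fun i _ => hs i)]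
    refine Finset.prod_congr rfl fun i _ => ?_
    rw [← Measure.map_apply (hmeas i) (hs i), hunif i]
    rfl
  -- identify the sums of ε with A
  have hεA : ∀ ω : Ω, ∀ k : ℕ, (∑ i ∈ Finset.range k, ε i ω) = A p (T ω) k := by
    intro ω k
    induction k using Nat.strong_induction_on with
    | _ k ihk =>
      match k with
      | 0 => simp [A_zero]
      | 1 => simp [hε0, A_one]
      | (m+2) =>
        have h1 : ∑ i ∈ Finset.range (m+1), ε i ω = A p (T ω) (m+1) := ihk (m+1) (by omega)
        have h0 : ∑ i ∈ Finset.range ((m+1)-1), ε i ω = A p (T ω) m := by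
          simpa using ihk m (by omega)
        rw [Finset.sum_range_succ, h1, hεk (m+1) (by omega), A_succ_succ]
        congr 1
        simp only [h1, h0]
        rfl
  have hεA' : ∀ ω : Ω, ε k ω = A p (T ω) (k+1) - A p (T ω) k := by
    intro ω
    have h1 := hεA ω (k+1)
    have h0 := hεA ω k
    rw [Finset.sum_range_succ, h0] at h1
    linarith
  have hpN : p * N < 1 := by
    rw [lt_div_iff₀ (by exact_mod_cast hN : (0:ℝ) < N)] at hp'
    exact hp'
  have hF : Measurable (fun v : Fin N → ℝ => A p v (k+1) - A p v k) :=
    (measurable_A p (k+1)).sub (measurable_A p k)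
  calc ∫ ω, ε k ω ∂μ
      = ∫ ω, (A p (T ω) (k+1) - A p (T ω) k) ∂μ := by
        exact integral_congr_ae (ae_of_all _ hεA')
    _ = ∫ v : Fin N → ℝ, (A p v (k+1) - A p v k) ∂(μ.map T) :=
        (integral_map hTmeas.aemeasurable hF.aestronglyMeasurable).symm
    _ = ∫ v : Fin N → ℝ, (A p v (k+1) - A p v k) ∂(Measure.pi fun _ : Fin N => mu0) := by
        rw [hmap]
    _ = (∏ i ∈ Finset.range k, ((N:ℝ) - i)) * p ^ k := core N p hp hpN k hkN
    _ = ((N.factorial : ℝ) / (N - k).factorial) * p ^ k := by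
        rw [prod_desc N k hkN]
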